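/- Let K be a field containing ℂ which is finitely generated as a field extension of ℂ and has transcendence degree at most 1 over ℂ. Then for all nonzero a, b ∈ K, the quadratic form x² − a·y² − b·z² has a nontrivial zero over K; equivalently, the quaternion algebra ℍ[K,a,b] is not a division ring. (Tsen's theorem: the Brauer group of the function field of a curve over an algebraically closed field vanishes on quaternion classes.) -/

import Mathlib

open Quaternion

open MvPolynomial

namespace TsenAux

/-- Monomials of given degree correspond to `Sym`. -/
noncomputable def degreeEquivSym (k t : ℕ) :
    {d : Fin k →₀ ℕ // d.degree = t} ≃ Sym (Fin k) t where
  toFun d := ⟨Finsupp.toMultiset d.1, by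
    rw [Finsupp.card_toMultiset]
    simpa [Finsupp.degree_apply, Finsupp.sum] using d.2⟩
  invFun s := ⟨Multiset.toFinsupp s.1, by
    have h := Finsupp.card_toMultiset (Multiset.toFinsupp s.1)
    rw [Multiset.toFinsupp_toMultiset] at h
    have := s.2
    simp only [Finsupp.degree_apply, Finsupp.sum, id] at *
    omega⟩
  left_inv d := by
    ext1
    simp [Finsupp.toMultiset_toFinsupp]
  right_inv s := by
    ext1
    simp [Multiset.toFinsupp_toMultiset]

noncomputable instance degFintype (k t : ℕ) : Fintype {d : Fin k →₀ ℕ // d.degree = t} :=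
  Fintype.ofEquiv _ (degreeEquivSym k t).symm

lemma card_deg (k t : ℕ) :
    Fintype.card {d : Fin k →₀ ℕ // d.degree = t} = (k + t - 1).choose t := by
  rw [Fintype.card_congr (degreeEquivSym k t)]
  rw [Sym.card_sym_eq_choose]
  simp




lemma choose_diag_mono (a : ℕ) : Monotone (fun j => (a + j).choose j) := by
  apply monotone_nat_of_le_succ
  intro j
  have h := Nat.choose_succ_succ (a + j) j
  have : a + (j+1) = (a + j) + 1 := by omega
  simp only [this, h]
  omega

lemma numeric (n r d₀ C : ℕ) (hr1 : 1 ≤ r) (hrn : r + 1 ≤ n) (hC : 1 ≤ C) :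
    (C * n + r - 1).choose (r-1) * C < (d₀ + 2*(C*n) + n - 1).choose (n-1) := by
  set t := C * n with ht
  set e := d₀ + 2*t with he
  have hn2 : 2 ≤ n := by omega
  have step1 : (t + r - 1).choose (r-1) ≤ (t + (n-2)).choose (n-2) := by
    have h1 : t + r - 1 = t + (r-1) := by omega
    rw [h1]
    exact choose_diag_mono t (by omega)
  have step2 : (t + (n-2)).choose (n-2) ≤ (e + (n-2)).choose (n-2) :=
    Nat.choose_le_choose _ (by omega)
  set Cc := (e + (n-2)).choose (n-2) with hCc
  have hCcpos : 0 < Cc := Nat.choose_pos (by omega)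
  have step3 : (e + n - 1) * Cc = (e + n - 1).choose (n-1) * (n-1) := by
    have h := Nat.add_one_mul_choose_eq (e + n - 2) (n - 2)
    have h1 : e + n - 2 + 1 = e + n - 1 := by omega
    have h2 : n - 2 + 1 = n - 1 := by omega
    have h3 : e + (n - 2) = e + n - 2 := by omega
    rw [h1, h2] at h
    rw [hCc, h3, h]
  have key : (n-1) * C < e + n - 1 := by
    have h1 : (n-1) * C < 2 * C * n := by
      have := mul_lt_mul_of_pos_right (show n-1 < 2*n by omega) (show 0 < C by omega)
      calc (n-1) * C < 2*n*C := this
      _ = 2 * C * n := by ring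
    have h2 : 2 * C * n ≤ e + n - 1 := by
      have : 2 * C * n = 2 * t := by rw [ht]; ring
      omega
    omega
  -- Cc * ((n-1) * C) < Cc * (e + n - 1)
  have key2 : Cc * ((n-1) * C) < Cc * (e + n - 1) :=
    mul_lt_mul_of_pos_left key hCcpos
  have key3 : (n-1) * (Cc * C) < (n-1) * ((e + n - 1).choose (n-1)) := by
    calc (n-1) * (Cc * C) = Cc * ((n-1) * C) := by ring
    _ < Cc * (e + n - 1) := key2
    _ = (e + n - 1) * Cc := by ring
    _ = (e + n - 1).choose (n-1) * (n-1) := step3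
    _ = (n-1) * ((e + n - 1).choose (n-1)) := by ring
  have key4 : Cc * C < (e + n - 1).choose (n-1) := Nat.lt_of_mul_lt_mul_left key3
  calc (t + r - 1).choose (r-1) * C ≤ Cc * C :=
        Nat.mul_le_mul_right C (le_trans step1 step2)
  _ < _ := key4




variable {n r : ℕ}


/-- L0: homogeneous component of a product with a homogeneous polynomial. -/
lemma homogeneousComponent_mul_homog {σ : Type*} (g f : MvPolynomial σ ℂ) {d e : ℕ}
    (hf : f.IsHomogeneous d) (hde : d ≤ e) :
    homogeneousComponent e (g * f) = homogeneousComponent (e - d) g * f := by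
  classical
  conv_lhs => rw [← sum_homogeneousComponent g, Finset.sum_mul, map_sum]
  have h1 : ∀ i, homogeneousComponent e ((homogeneousComponent i g) * f)
      = if i = e - d then (homogeneousComponent i g) * f else 0 := by
    intro i
    have hmem : (homogeneousComponent i g) * f ∈ homogeneousSubmodule σ ℂ (i + d) :=
      (mem_homogeneousSubmodule _ _).mpr
        ((homogeneousComponent_isHomogeneous i g).mul hf)
    rw [homogeneousComponent_of_mem hmem]
    exact if_congr (by omega) rfl rfl
  simp_rw [h1]
  rw [Finset.sum_ite_eq' (Finset.range (g.totalDegree + 1)) (e-d)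
    (fun i => homogeneousComponent i g * f)]
  split_ifs with h
  · rfl
  · rw [homogeneousComponent_eq_zero, zero_mul]
    simp only [Finset.mem_range] at h
    omega

/-- L1: a homogeneous element of the ideal has a homogeneous representation. -/
lemma exists_homog_rep (f : Fin r → MvPolynomial (Fin n) ℂ)
    (hf : ∀ i, (f i).IsHomogeneous 2) {p : MvPolynomial (Fin n) ℂ} {e : ℕ}
    (hp : p.IsHomogeneous e) (hpI : p ∈ Ideal.span (Set.range f)) (he : 2 ≤ e) :
    ∃ h : Fin r → MvPolynomial (Fin n) ℂ,
      (∀ i, (h i).IsHomogeneous (e - 2)) ∧ p = ∑ i, h i * f i := by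
  obtain ⟨g, hg⟩ := Ideal.mem_span_range_iff_exists_fun.mp hpI
  refine ⟨fun i => homogeneousComponent (e - 2) (g i),
    fun i => homogeneousComponent_isHomogeneous _ _, ?_⟩
  have h2 := congrArg (homogeneousComponent e) hg
  rw [map_sum] at h2
  have h3 : ∀ i : Fin r, homogeneousComponent e (g i * f i)
      = homogeneousComponent (e - 2) (g i) * f i := fun i =>
    homogeneousComponent_mul_homog (g i) (f i) (hf i) he
  simp_rw [h3] at h2
  rw [h2, homogeneousComponent_of_mem ((mem_homogeneousSubmodule _ _).mpr hp), if_pos rfl]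

/-- L2: homogeneous polynomials of high degree lie in the ideal. -/
lemma high_degree_mem (f : Fin r → MvPolynomial (Fin n) ℂ) (k : ℕ)
    (hX : ∀ j : Fin n, (X j : MvPolynomial (Fin n) ℂ) ^ k ∈ Ideal.span (Set.range f))
    {p : MvPolynomial (Fin n) ℂ} {e : ℕ} (hp : p.IsHomogeneous e) (he : n * (k-1) < e) :
    p ∈ Ideal.span (Set.range f) := by
  classical
  rw [← support_sum_monomial_coeff p]
  refine Submodule.sum_mem _ fun d hd => ?_
  have hdeg : d.degree = e := by
    by_contra hne
    exact (mem_support_iff.mp hd) (hp.coeff_eq_zero hne)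
  -- find a variable with large exponent
  have hj : ∃ j : Fin n, k ≤ d j := by
    by_contra hcon
    push_neg at hcon
    have h1 : d.degree ≤ ∑ j : Fin n, d j := by
      rw [Finsupp.degree]
      exact Finset.sum_le_sum_of_subset (Finset.subset_univ _)
    have h2 : ∑ j : Fin n, d j ≤ n * (k-1) := by
      calc ∑ j : Fin n, d j ≤ ∑ _j : Fin n, (k-1) :=
            Finset.sum_le_sum (fun j _ => by have := hcon j; omega)
      _ = n * (k-1) := by simp [Finset.sum_const, mul_comm]
    omega
  obtain ⟨j, hj⟩ := hj
  have hle : Finsupp.single j k ≤ d := by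
    rw [Finsupp.single_le_iff]; exact hj
  have hsplit : monomial d (coeff d p)
      = monomial (d - Finsupp.single j k) (coeff d p) * (X j) ^ k := by
    rw [X_pow_eq_monomial, monomial_mul, mul_one, tsub_add_cancel_of_le hle]
  rw [hsplit]
  exact Ideal.mul_mem_left _ _ (hX j)


lemma prod_pow_single_add (f : Fin r → MvPolynomial (Fin n) ℂ) (α : Fin r →₀ ℕ) (i : Fin r) :
    (∏ j, f j ^ ((α + Finsupp.single i 1 : Fin r →₀ ℕ) j)) = f i * ∏ j, f j ^ (α j) := by
  have h : ∀ j : Fin r, f j ^ ((α + Finsupp.single i 1 : Fin r →₀ ℕ) j)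
      = f j ^ (α j) * f j ^ (Finsupp.single i 1 j) := by
    intro j; rw [← pow_add]; rfl
  simp_rw [h]
  rw [Finset.prod_mul_distrib]
  have h2 : (∏ j, f j ^ (Finsupp.single i 1 j)) = f i := by
    rw [Finset.prod_eq_single i]
    · simp
    · intro j _ hji
      rw [Finsupp.single_apply, if_neg (by exact fun h => hji h.symm), pow_zero]
    · simp
  rw [h2]; ring

lemma degree_add' {σ : Type*} (a b : σ →₀ ℕ) : (a+b).degree = a.degree + b.degree := by
  simp [Finsupp.degree_eq_weight_one, map_add]

lemma degree_single_one {σ : Type*} (i : σ) : (Finsupp.single i 1 : σ →₀ ℕ).degree = 1 := by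
  classical
  simp [Finsupp.degree_apply, Finsupp.support_single_ne_zero i (one_ne_zero)]

lemma degree_add_single (α : Fin r →₀ ℕ) (i : Fin r) :
    (α + Finsupp.single i 1).degree = α.degree + 1 := by
  rw [degree_add', degree_single_one]

/-- The spanning family: products `f^α · X^β`. -/
noncomputable def sFam (f : Fin r → MvPolynomial (Fin n) ℂ) (d₀ t : ℕ) :
    ({α : Fin r →₀ ℕ // α.degree = t} × {β : Fin n →₀ ℕ // β.degree = d₀}) →
      MvPolynomial (Fin n) ℂ :=
  fun q => (∏ i, (f i) ^ (q.1.1 i)) * monomial q.2.1 1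

lemma span_step (f : Fin r → MvPolynomial (Fin n) ℂ) (hf : ∀ i, (f i).IsHomogeneous 2)
    (k d₀ : ℕ) (hX : ∀ j : Fin n, (X j : MvPolynomial (Fin n) ℂ) ^ k ∈ Ideal.span (Set.range f))
    (hd₀ : n * (k-1) ≤ d₀ + 1) :
    ∀ t : ℕ, ∀ p : MvPolynomial (Fin n) ℂ, p.IsHomogeneous (d₀ + 2*t) →
      p ∈ Submodule.span ℂ (Set.range (sFam f d₀ t)) := by
  intro t
  induction t with
  | zero =>
    intro p hp
    rw [← support_sum_monomial_coeff p]
    refine Submodule.sum_mem _ fun d hd => ?_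
    have hdeg : d.degree = d₀ := by
      by_contra hne
      exact (mem_support_iff.mp hd) (hp.coeff_eq_zero (by simpa using hne))
    have : monomial d (coeff d p) = (coeff d p) • sFam f d₀ 0 ⟨⟨0, by simp [Finsupp.degree]⟩, ⟨d, hdeg⟩⟩ := by
      simp only [sFam, Finsupp.coe_zero, Pi.zero_apply, pow_zero, Finset.prod_const_one, one_mul]
      rw [smul_eq_C_mul, C_mul_monomial, mul_one]
    rw [this]
    exact Submodule.smul_mem _ _ (Submodule.subset_span ⟨_, rfl⟩)
  | succ t ih =>
    intro p hp
    have he2 : (2:ℕ) ≤ d₀ + 2*(t+1) := by omega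
    have hpI : p ∈ Ideal.span (Set.range f) :=
      high_degree_mem f k hX hp (by omega)
    obtain ⟨h, hhom, hrep⟩ := exists_homog_rep f hf hp hpI he2
    have hd2 : d₀ + 2*(t+1) - 2 = d₀ + 2*t := by omega
    rw [hrep]
    refine Submodule.sum_mem _ fun i _ => ?_
    have hhi : h i ∈ Submodule.span ℂ (Set.range (sFam f d₀ t)) :=
      ih (h i) (by rw [← hd2]; exact hhom i)
    -- h i * f i  =  mulLeft (f i) applied
    have : h i * f i = (LinearMap.mulLeft ℂ (f i)) (h i) := by
      simp [LinearMap.mulLeft_apply]; ring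
    rw [this]
    have hmap := Submodule.mem_map_of_mem (f := LinearMap.mulLeft ℂ (f i)) hhi
    rw [Submodule.map_span] at hmap
    refine Submodule.span_le.mpr ?_ hmap
    rintro x ⟨y, ⟨⟨⟨α, hα⟩, ⟨β, hβ⟩⟩, rfl⟩, rfl⟩
    apply Submodule.subset_span
    refine ⟨⟨⟨α + Finsupp.single i 1, by rw [degree_add_single, hα]⟩, ⟨β, hβ⟩⟩, ?_⟩
    simp only [sFam, LinearMap.mulLeft_apply]
    rw [prod_pow_single_add]
    ring


/-- Key lemma: over `ℂ`, `r < n` quadratic forms in `n` variables have a common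
nontrivial zero. -/
lemma key_lemma (n r : ℕ) (hrn : r < n) (f : Fin r → MvPolynomial (Fin n) ℂ)
    (hf : ∀ i, (f i).IsHomogeneous 2) :
    ∃ x : Fin n → ℂ, x ≠ 0 ∧ ∀ i, eval x (f i) = 0 := by
  classical
  rcases Nat.eq_zero_or_pos r with hr0 | hr1
  · subst hr0
    refine ⟨fun _ => 1, ?_, fun i => i.elim0⟩
    intro hcon
    have := congrFun hcon ⟨0, by omega⟩
    simp at this
  by_contra hcon
  push_neg at hcon
  set I := Ideal.span (Set.range f) with hI
  have hrad : ∀ j : Fin n, (X j : MvPolynomial (Fin n) ℂ) ∈ I.radical := by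
    intro j
    rw [← vanishingIdeal_zeroLocus_eq_radical (K := ℂ)]
    intro x hx
    have hx0 : x = 0 := by
      by_contra hx0
      obtain ⟨i, hi⟩ := hcon x hx0
      exact hi (hx _ (Ideal.subset_span ⟨i, rfl⟩))
    simp [hx0]
  have hradk : ∀ j : Fin n, ∃ m : ℕ, (X j : MvPolynomial (Fin n) ℂ) ^ m ∈ I := fun j => hrad j
  choose ks hks using hradk
  set k := Finset.univ.sup ks + 1 with hk
  have hX : ∀ j : Fin n, (X j : MvPolynomial (Fin n) ℂ) ^ k ∈ I := by
    intro j
    have hle : ks j ≤ Finset.univ.sup ks := Finset.le_sup (Finset.mem_univ j)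
    have : (X j : MvPolynomial (Fin n) ℂ) ^ k
        = (X j) ^ (ks j) * (X j) ^ (k - ks j) := by
      rw [← pow_add]; congr 1; omega
    rw [this]
    exact Ideal.mul_mem_right _ _ (hks j)
  -- parameters
  set d₀ := n * (k - 1) with hd₀
  set C := (n + d₀ - 1).choose d₀ with hC
  have hCpos : 1 ≤ C := Nat.choose_pos (by omega)
  set t := C * n with ht
  set e := d₀ + 2 * t with he
  -- the independent family of monomials of degree e
  set v : {β : Fin n →₀ ℕ // β.degree = e} → MvPolynomial (Fin n) ℂ :=
    fun β => monomial β.1 (1:ℂ) with hv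
  have hli : LinearIndependent ℂ v := by
    have h1 : LinearIndependent ℂ (fun d : (Fin n →₀ ℕ) => monomial d (1:ℂ)) := by
      have := (basisMonomials (Fin n) ℂ).linearIndependent
      rwa [coe_basisMonomials] at this
    exact h1.comp Subtype.val Subtype.val_injective
  set w : Set (MvPolynomial (Fin n) ℂ) := Set.range (sFam f d₀ t) with hw
  letI : Fintype ↑w := (Set.finite_range _).fintype
  have hspan : Set.range v ≤ ↑(Submodule.span ℂ w) := by
    rintro x ⟨β, rfl⟩
    exact span_step f hf k d₀ hX (by omega) t _
      (isHomogeneous_monomial _ β.2)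
  have hcard := linearIndependent_le_span' v hli w hspan
  rw [Cardinal.mk_fintype, Nat.cast_le] at hcard
  have hcard2 : Fintype.card ↑w ≤ Fintype.card
      ({α : Fin r →₀ ℕ // α.degree = t} × {β : Fin n →₀ ℕ // β.degree = d₀}) :=
    Fintype.card_range_le _
  rw [card_deg] at hcard
  rw [Fintype.card_prod, card_deg, card_deg] at hcard2
  -- numeric contradiction
  have hnum := numeric n r d₀ C hr1 (by omega) hCpos
  have he1 : (n + e - 1).choose e = (e + n - 1).choose (n-1) := by
    rw [show e + n - 1 = n + e - 1 by omega,
      ← Nat.choose_symm (show e ≤ n + e - 1 by omega),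
      show n + e - 1 - e = n - 1 by omega]
  have he2 : (r + t - 1).choose t = (t + r - 1).choose (r-1) := by
    rw [show t + r - 1 = r + t - 1 by omega,
      ← Nat.choose_symm (show t ≤ r + t - 1 by omega),
      show r + t - 1 - t = r - 1 by omega]
  rw [he1] at hcard
  rw [he2] at hcard2
  have : (e + n - 1).choose (n-1) ≤ (t + r - 1).choose (r-1) * C :=
    le_trans hcard hcard2
  rw [← ht, ← he] at hnum
  omega


open Module in
/-- Bilinear version of the key lemma. -/
lemma bilinear_lemma (V W : Type*) [AddCommGroup V] [Module ℂ V]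
    [AddCommGroup W] [Module ℂ W] [FiniteDimensional ℂ V] [FiniteDimensional ℂ W]
    (B : V →ₗ[ℂ] V →ₗ[ℂ] W) (h : finrank ℂ W < finrank ℂ V) :
    ∃ v : V, v ≠ 0 ∧ B v v = 0 := by
  classical
  set nV := finrank ℂ V with hnV
  set nW := finrank ℂ W with hnW
  set bV := Module.finBasis ℂ V with hbV
  set bW := Module.finBasis ℂ W with hbW
  set f : Fin nW → MvPolynomial (Fin nV) ℂ := fun l =>
    ∑ p : Fin nV, ∑ q : Fin nV,
      MvPolynomial.C ((bW.repr (B (bV p) (bV q))) l) * (MvPolynomial.X p * MvPolynomial.X q)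
    with hf
  have hfhom : ∀ l, (f l).IsHomogeneous 2 := by
    intro l
    apply MvPolynomial.IsHomogeneous.sum
    intro p _
    apply MvPolynomial.IsHomogeneous.sum
    intro q _
    exact (MvPolynomial.isHomogeneous_C _ _).mul
      ((MvPolynomial.isHomogeneous_X _ _).mul (MvPolynomial.isHomogeneous_X _ _))
  obtain ⟨x, hx0, hxf⟩ := key_lemma nV nW h f hfhom
  set v := bV.equivFun.symm x with hv
  have hvsum : v = ∑ p : Fin nV, x p • bV p := bV.equivFun_symm_apply x
  refine ⟨v, ?_, ?_⟩
  · intro hc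
    apply hx0
    have h2 := congrArg bV.equivFun (hv ▸ hc)
    rwa [LinearEquiv.apply_symm_apply, map_zero] at h2
  have hBv : B v = ∑ p : Fin nV, x p • B (bV p) := by
    rw [hvsum, map_sum]
    exact Finset.sum_congr rfl fun p _ => map_smul B _ _
  have h2 : ∀ p, B (bV p) v = ∑ q : Fin nV, x q • B (bV p) (bV q) := by
    intro p
    rw [hvsum, map_sum]
    exact Finset.sum_congr rfl fun q _ => map_smul _ _ _
  have hBvv : B v v = ∑ p : Fin nV, ∑ q : Fin nV, (x p * x q) • B (bV p) (bV q) := by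
    calc B v v = (∑ p : Fin nV, x p • B (bV p)) v := by rw [hBv]
    _ = ∑ p : Fin nV, x p • (B (bV p) v) := by
        rw [LinearMap.sum_apply]
        exact Finset.sum_congr rfl fun p _ => rfl
    _ = ∑ p : Fin nV, ∑ q : Fin nV, (x p * x q) • B (bV p) (bV q) := by
        refine Finset.sum_congr rfl fun p _ => ?_
        rw [h2 p, Finset.smul_sum]
        exact Finset.sum_congr rfl fun q _ => by rw [smul_smul]
  apply (Basis.forall_coord_eq_zero_iff bW).mp
  intro l
  have heval := hxf l
  rw [hf] at heval
  simp only [map_sum, MvPolynomial.eval_mul, MvPolynomial.eval_C, MvPolynomial.eval_X] at heval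
  have heval' : ∑ p : Fin nV, ∑ q : Fin nV,
      (x p * x q) * ((bW.repr (B (bV p) (bV q))) l) = 0 := by
    rw [← heval]
    exact Finset.sum_congr rfl fun p _ => Finset.sum_congr rfl fun q _ => by ring
  rw [Basis.coord_apply, hBvv, map_sum, Finsupp.finset_sum_apply]
  have h3 : ∀ p : Fin nV, (bW.repr (∑ q : Fin nV, (x p * x q) • B (bV p) (bV q))) l
      = ∑ q : Fin nV, (x p * x q) * ((bW.repr (B (bV p) (bV q))) l) := by
    intro p
    rw [map_sum, Finsupp.finset_sum_apply]
    exact Finset.sum_congr rfl fun q _ => by rw [map_smul]; simp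
  simp_rw [h3]
  exact heval'

variable {K : Type*} [Field K] [Algebra ℂ K]




/-- From a nontrivial zero of the conic, the quaternion algebra has a zero divisor. -/
lemma quat_not_div (a b x y z : K) (hnt : ¬ (x = 0 ∧ y = 0 ∧ z = 0))
    (hrel : x ^ 2 - a * y ^ 2 - b * z ^ 2 = 0) :
    ¬ (∀ q : ℍ[K, a, b], q ≠ 0 → IsUnit q) := by
  intro hall
  set q : ℍ[K, a, b] := ⟨x, y, z, 0⟩ with hq
  have hq0 : q ≠ 0 := by
    intro hc
    rw [QuaternionAlgebra.ext_iff] at hc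
    exact hnt ⟨hc.1, hc.2.1, hc.2.2.1⟩
  have hmul : q * star q = 0 := by
    refine QuaternionAlgebra.ext ?_ ?_ ?_ ?_ <;>
      simp only [QuaternionAlgebra.re_mul, QuaternionAlgebra.imI_mul,
        QuaternionAlgebra.imJ_mul, QuaternionAlgebra.imK_mul, QuaternionAlgebra.re_star,
        QuaternionAlgebra.imI_star, QuaternionAlgebra.imJ_star, QuaternionAlgebra.imK_star,
        QuaternionAlgebra.re_zero, QuaternionAlgebra.imI_zero, QuaternionAlgebra.imJ_zero,
        QuaternionAlgebra.imK_zero]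
    · linear_combination hrel
    all_goals ring
  have hstar0 : star q = 0 := ((hall q hq0).mul_right_eq_zero).mp hmul
  rw [QuaternionAlgebra.ext_iff] at hstar0
  exact hnt ⟨by simpa using hstar0.1, by simpa using hstar0.2.1, by simpa using hstar0.2.2.1⟩

set_option maxHeartbeats 1000000 in
lemma alg_over_adjoin (htr : ∀ f : Fin 2 → K, ¬ AlgebraicIndependent ℂ f)
    {t : K} (ht : Transcendental ℂ t) :
    Algebra.IsAlgebraic (IntermediateField.adjoin ℂ ({t} : Set K)) K := by
  have hx : AlgebraicIndependent ℂ ![t] := algebraicIndependent_iff_transcendental.mpr ht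
  constructor
  intro u
  have hopt : ¬ (AlgebraicIndependent ℂ fun o : Option (Fin 1) => o.elim u ![t]) := by
    intro hInd
    have hinj : Function.Injective (![some 0, none] : Fin 2 → Option (Fin 1)) := by decide
    exact htr _ (hInd.comp _ hinj)
  have h1 : ¬ Transcendental (Algebra.adjoin ℂ (Set.range ![t])) u := fun hT =>
    hopt (AlgebraicIndependent.option_iff.mpr ⟨hx, hT⟩)
  have h2 : IsAlgebraic (Algebra.adjoin ℂ (Set.range ![t])) u := not_not.mp h1
  have hrange : Set.range ![t] = ({t} : Set K) := by
    simp [Set.range_subset_iff]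
  rw [hrange] at h2
  letI : Algebra (Algebra.adjoin ℂ ({t} : Set K)) (IntermediateField.adjoin ℂ ({t} : Set K)) :=
    (Subalgebra.inclusion (IntermediateField.algebra_adjoin_le_adjoin ℂ _)).toRingHom.toAlgebra
  haveI : IsScalarTower (Algebra.adjoin ℂ ({t} : Set K))
      (IntermediateField.adjoin ℂ ({t} : Set K)) K :=
    IsScalarTower.of_algebraMap_eq (congrFun rfl)
  refine IsAlgebraic.extendScalars ?_ h2
  intro x y h
  exact Subalgebra.inclusion_injective (IntermediateField.algebra_adjoin_le_adjoin ℂ _) h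

lemma findim_over (hfg : (⊤ : IntermediateField ℂ K).FG) (F : IntermediateField ℂ K)
    [Algebra.IsAlgebraic F K] : FiniteDimensional F K := by
  obtain ⟨S, hS⟩ := hfg
  have htop : IntermediateField.adjoin F (↑S : Set K) = ⊤ := by
    rw [eq_top_iff]
    intro x _
    have hle : IntermediateField.adjoin ℂ (↑S : Set K)
        ≤ (IntermediateField.adjoin F (↑S : Set K)).restrictScalars ℂ :=
      IntermediateField.adjoin_le_iff.mpr (fun s hs => IntermediateField.subset_adjoin F _ hs)
    exact hle (hS ▸ IntermediateField.mem_top)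
  haveI hfd : FiniteDimensional F (IntermediateField.adjoin F (↑S : Set K)) :=
    IntermediateField.finiteDimensional_adjoin
      (fun x _ => isAlgebraic_iff_isIntegral.mp (Algebra.IsAlgebraic.isAlgebraic x))
  rw [htop] at hfd
  exact Module.Finite.equiv (IntermediateField.topEquiv (F := F) (E := K)).toLinearEquiv


open Module in
set_option maxHeartbeats 2000000 in
lemma conic_zero {K : Type*} [Field K] [Algebra ℂ K]
    (hfg : (⊤ : IntermediateField ℂ K).FG)
    (htr : ∀ f : Fin 2 → K, ¬ AlgebraicIndependent ℂ f) (a b : K) {t : K}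
    (ht : Transcendental ℂ t) :
    ∃ x y z : K, ¬ (x = 0 ∧ y = 0 ∧ z = 0) ∧ x ^ 2 - a * y ^ 2 - b * z ^ 2 = 0 := by
  classical
  set F := IntermediateField.adjoin ℂ ({t} : Set K) with hF
  haveI halg : Algebra.IsAlgebraic F K := alg_over_adjoin htr ht
  haveI hfd : FiniteDimensional F K := findim_over hfg F
  set m := finrank F K with hm
  have hm1 : 0 < m := finrank_pos
  set bK := Module.finBasis F K with hbK
  set R₀ := Algebra.adjoin ℂ ({t} : Set K) with hR₀
  have haevalmem : ∀ p : Polynomial ℂ, Polynomial.aeval t p ∈ R₀ := by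
    intro p; rw [hR₀, Algebra.adjoin_singleton_eq_range_aeval]; exact ⟨p, rfl⟩
  have hT : Function.Injective (Polynomial.aeval t : Polynomial ℂ →ₐ[ℂ] K) :=
    transcendental_iff_injective.mp ht
  set g : Fin 3 → K := ![1, a, b] with hg
  set coord : Fin 3 × Fin m × Fin m × Fin m → F :=
    fun ix => (bK.repr (g ix.1 * bK ix.2.1 * bK ix.2.2.1)) ix.2.2.2 with hcoord
  have hrep : ∀ ix, ∃ r s : Polynomial ℂ,
      (coord ix : K) = Polynomial.aeval t r / Polynomial.aeval t s := by
    intro ix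
    exact (IntermediateField.mem_adjoin_simple_iff ℂ _).mp (coord ix).2
  choose rp sp hrs using hrep
  set den : Fin 3 × Fin m × Fin m × Fin m → K :=
    fun ix => if (coord ix : K) = 0 then 1 else Polynomial.aeval t (sp ix) with hden
  have hdenR : ∀ ix, den ix ∈ R₀ := by
    intro ix; rw [hden]; dsimp only; split_ifs
    · exact one_mem R₀
    · exact haevalmem _
  have hden0 : ∀ ix, den ix ≠ 0 := by
    intro ix; rw [hden]; dsimp only; split_ifs with h
    · exact one_ne_zero
    · intro hs
      exact h (by rw [hrs ix, hs, div_zero])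
  have hdenc : ∀ ix, den ix * (coord ix : K) ∈ R₀ := by
    intro ix; rw [hden]; dsimp only; split_ifs with h
    · rw [one_mul, h]; exact zero_mem R₀
    · have hs0 : Polynomial.aeval t (sp ix) ≠ 0 := fun hs => h (by rw [hrs ix, hs, div_zero])
      rw [hrs ix, mul_comm, div_mul_cancel₀ _ hs0]
      exact haevalmem _
  set Δ : K := ∏ ix, den ix with hΔ
  have hΔ0 : Δ ≠ 0 := Finset.prod_ne_zero_iff.mpr (fun ix _ => hden0 ix)
  have hΔc : ∀ ix, Δ * (coord ix : K) ∈ R₀ := by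
    intro ix
    rw [hΔ, ← Finset.mul_prod_erase _ _ (Finset.mem_univ ix), mul_comm (den ix) _, mul_assoc]
    exact mul_mem (prod_mem fun j _ => hdenR j) (hdenc ix)
  have hΔP : ∀ ix, ∃ P : Polynomial ℂ, Polynomial.aeval t P = Δ * (coord ix : K) := by
    intro ix
    have h1 := hΔc ix
    rw [hR₀, Algebra.adjoin_singleton_eq_range_aeval] at h1
    obtain ⟨P, hP⟩ := h1
    exact ⟨P, hP⟩
  choose Ps hPs using hΔP
  set D₀ := Finset.univ.sup fun ix => (Ps ix).natDegree with hD₀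
  set N := D₀ with hN
  set powSpan : Submodule ℂ K :=
    Submodule.span ℂ (Set.range fun s : Fin (D₀+1) => t ^ (s : ℕ)) with hps
  have hΔspan : ∀ ix, Δ * (coord ix : K) ∈ powSpan := by
    intro ix
    rw [← hPs ix, Polynomial.aeval_eq_sum_range]
    refine Submodule.sum_mem _ fun i hi => Submodule.smul_mem _ _ ?_
    have h1 : (Ps ix).natDegree ≤ D₀ := Finset.le_sup (f := fun ix => (Ps ix).natDegree) (Finset.mem_univ ix)
    have h2 := Finset.mem_range.mp hi
    exact Submodule.subset_span ⟨⟨i, by omega⟩, rfl⟩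
  set U : Submodule ℂ K := Submodule.span ℂ
    (Set.range fun p : Fin (N+1) × Fin m => t ^ (p.1 : ℕ) * bK p.2) with hU
  set Wm : Submodule ℂ K := Submodule.span ℂ
    (Set.range fun p : Fin (2*N+D₀+1) × Fin m => t ^ (p.1 : ℕ) * bK p.2) with hW
  haveI : FiniteDimensional ℂ ↥U := FiniteDimensional.span_of_finite ℂ (Set.finite_range _)
  haveI : FiniteDimensional ℂ ↥Wm := FiniteDimensional.span_of_finite ℂ (Set.finite_range _)
  -- step lemma for membership in Wm
  have hstep : ∀ (jj : ℕ), jj ≤ 2*N → ∀ (l : Fin m), ∀ x ∈ powSpan, t ^ jj * (x * bK l) ∈ Wm := by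
    intro jj hjj l x hx
    induction hx using Submodule.span_induction with
    | mem y hy =>
      obtain ⟨s, rfl⟩ := hy
      have he : t ^ jj * (t ^ (s : ℕ) * bK l) = t ^ (jj + (s:ℕ)) * bK l := by
        rw [pow_add]; ring
      rw [he]
      have hs := s.is_le
      exact Submodule.subset_span ⟨(⟨jj + (s:ℕ), by omega⟩, l), rfl⟩
    | zero => simpa using Submodule.zero_mem Wm
    | add y z _ _ hy hz =>
      have he : t ^ jj * ((y + z) * bK l) = t ^ jj * (y * bK l) + t ^ jj * (z * bK l) := by ring
      rw [he]; exact Submodule.add_mem _ hy hz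
    | smul c y _ hy =>
      have he : t ^ jj * ((c • y) * bK l) = c • (t ^ jj * (y * bK l)) := by
        rw [Algebra.smul_def, Algebra.smul_def]; ring
      rw [he]; exact Submodule.smul_mem _ _ hy
  -- base case of the key bilinear membership
  have hbase : ∀ (ν : Fin 3) (p q : Fin (N+1) × Fin m),
      Δ * (g ν * ((t ^ ((p.1:ℕ)) * bK p.2) * (t ^ ((q.1:ℕ)) * bK q.2))) ∈ Wm := by
    intro ν p q
    have hsum : g ν * bK p.2 * bK q.2 = ∑ l : Fin m, (coord (ν, p.2, q.2, l) : K) * bK l := by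
      conv_lhs => rw [← Basis.sum_repr bK (g ν * bK p.2 * bK q.2)]
      refine Finset.sum_congr rfl fun l _ => ?_
      rw [Algebra.smul_def]
      rfl
    have hexp : Δ * (g ν * ((t ^ ((p.1:ℕ)) * bK p.2) * (t ^ ((q.1:ℕ)) * bK q.2)))
        = ∑ l : Fin m, t ^ ((p.1:ℕ) + (q.1:ℕ)) * ((Δ * (coord (ν, p.2, q.2, l) : K)) * bK l) := by
      have h1 : Δ * (g ν * ((t ^ ((p.1:ℕ)) * bK p.2) * (t ^ ((q.1:ℕ)) * bK q.2)))
          = t ^ ((p.1:ℕ) + (q.1:ℕ)) * (Δ * (g ν * bK p.2 * bK q.2)) := by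
        rw [pow_add]; ring
      rw [h1, hsum, Finset.mul_sum, Finset.mul_sum]
      refine Finset.sum_congr rfl fun l _ => ?_
      ring
    rw [hexp]
    refine Submodule.sum_mem _ fun l _ => ?_
    exact hstep _ (by have := p.1.is_le; have := q.1.is_le; omega) l _ (hΔspan (ν, p.2, q.2, l))
  have hkey : ∀ (ν : Fin 3), ∀ u ∈ U, ∀ v ∈ U, Δ * (g ν * (u * v)) ∈ Wm := by
    intro ν u hu
    induction hu using Submodule.span_induction with
    | mem y hy =>
      intro v hv
      induction hv using Submodule.span_induction with
      | mem z hz =>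
        obtain ⟨p, rfl⟩ := hy
        obtain ⟨q, rfl⟩ := hz
        exact hbase ν p q
      | zero => simpa using Submodule.zero_mem Wm
      | add z w _ _ hz hw =>
        have he : Δ * (g ν * (y * (z + w))) = Δ * (g ν * (y * z)) + Δ * (g ν * (y * w)) := by ring
        rw [he]; exact Submodule.add_mem _ hz hw
      | smul c z _ hz =>
        have he : Δ * (g ν * (y * (c • z))) = c • (Δ * (g ν * (y * z))) := by
          rw [Algebra.smul_def, Algebra.smul_def]; ring
        rw [he]; exact Submodule.smul_mem _ _ hz
    | zero => intro v hv; simpa using Submodule.zero_mem Wm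
    | add y z _ _ hy hz =>
      intro v hv
      have he : Δ * (g ν * ((y + z) * v)) = Δ * (g ν * (y * v)) + Δ * (g ν * (z * v)) := by ring
      rw [he]; exact Submodule.add_mem _ (hy v hv) (hz v hv)
    | smul c y _ hy =>
      intro v hv
      have he : Δ * (g ν * ((c • y) * v)) = c • (Δ * (g ν * (y * v))) := by
        rw [Algebra.smul_def, Algebra.smul_def]; ring
      rw [he]; exact Submodule.smul_mem _ _ (hy v hv)
  -- linear independence of the family spanning U
  have hli : LinearIndependent ℂ (fun p : Fin (N+1) × Fin m => t ^ (p.1:ℕ) * bK p.2) := by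
    rw [Fintype.linearIndependent_iff]
    intro gc hgc
    set tF : F := ⟨t, IntermediateField.subset_adjoin ℂ _ rfl⟩ with htF
    set φ := IsScalarTower.toAlgHom ℂ F K with hφ
    have hφt : φ tF = t := rfl
    set cF : Fin m → F := fun i => ∑ j : Fin (N+1), gc (j, i) • tF ^ (j:ℕ) with hcF
    have hsum : ∑ i : Fin m, cF i • bK i = 0 := by
      rw [hcF]
      have h1 : ∀ i : Fin m, (∑ j : Fin (N+1), gc (j, i) • tF ^ (j:ℕ)) • bK i
          = ∑ j : Fin (N+1), gc (j, i) • (t ^ (j:ℕ) * bK i) := by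
        intro i
        rw [Finset.sum_smul]
        refine Finset.sum_congr rfl fun j _ => ?_
        rw [smul_assoc]
        congr 1
      simp_rw [h1]
      rw [← hgc, Fintype.sum_prod_type]
      rw [Finset.sum_comm]
    have hcF0 : ∀ i, cF i = 0 := by
      have hb := bK.linearIndependent
      rw [Fintype.linearIndependent_iff] at hb
      exact hb cF hsum
    intro p
    obtain ⟨j0, i⟩ := p
    have h2 : φ (cF i) = 0 := by rw [hcF0 i, map_zero]
    rw [hcF] at h2
    simp only [map_sum, map_smul, map_pow, hφt] at h2
    -- convert to a polynomial statement
    set P : Polynomial ℂ := ∑ j : Fin (N+1), Polynomial.C (gc (j, i)) * Polynomial.X ^ (j:ℕ)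
      with hP
    have hPeval : Polynomial.aeval t P = 0 := by
      rw [hP, map_sum]
      rw [← h2]
      refine Finset.sum_congr rfl fun j _ => ?_
      rw [map_mul, Polynomial.aeval_C, map_pow, Polynomial.aeval_X, Algebra.smul_def]
    have hP0 : P = 0 := hT (by rw [hPeval, map_zero])
    have hcoeff := congrArg (fun Q => Polynomial.coeff Q (j0:ℕ)) hP0
    simp only [hP, Polynomial.finset_sum_coeff, Polynomial.coeff_C_mul, Polynomial.coeff_X_pow,
      Polynomial.coeff_zero] at hcoeff
    rw [Finset.sum_eq_single j0] at hcoeff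
    · simpa using hcoeff
    · intro j _ hj
      rw [if_neg, mul_zero]
      intro hc
      exact hj (Fin.ext hc.symm)
    · intro hj
      exact absurd (Finset.mem_univ j0) hj
  -- dimension bounds
  have frU : (N+1) * m ≤ finrank ℂ ↥U := by
    set fam' : Fin (N+1) × Fin m → ↥U :=
      fun p => ⟨t ^ (p.1:ℕ) * bK p.2, Submodule.subset_span ⟨p, rfl⟩⟩ with hfam'
    have hli' : LinearIndependent ℂ fam' := by
      apply LinearIndependent.of_comp U.subtype
      exact hli
    have := hli'.fintype_card_le_finrank
    simpa [Fintype.card_prod] using this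
  have frW : finrank ℂ ↥Wm ≤ (2*N+D₀+1) * m := by
    classical
    letI : Fintype ↑(Set.range fun p : Fin (2*N+D₀+1) × Fin m => t ^ (p.1 : ℕ) * bK p.2) :=
      (Set.finite_range _).fintype
    have h1 := finrank_span_le_card (R := ℂ)
      (Set.range fun p : Fin (2*N+D₀+1) × Fin m => t ^ (p.1 : ℕ) * bK p.2)
    have h2 : (Set.range fun p : Fin (2*N+D₀+1) × Fin m =>
        t ^ (p.1 : ℕ) * bK p.2).toFinset.card ≤ (2*N+D₀+1) * m := by
      rw [Set.toFinset_card]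
      calc Fintype.card ↑(Set.range fun p : Fin (2*N+D₀+1) × Fin m => t ^ (p.1 : ℕ) * bK p.2)
          ≤ Fintype.card (Fin (2*N+D₀+1) × Fin m) := Fintype.card_range_le _
      _ = (2*N+D₀+1) * m := by simp [Fintype.card_prod]
    exact le_trans h1 h2
  have hdim : finrank ℂ ↥Wm < finrank ℂ (↥U × ↥U × ↥U) := by
    rw [Module.finrank_prod, Module.finrank_prod]
    have h3 : (2*N+D₀+1) * m < 3 * ((N+1) * m) := by
      have : 2*N+D₀+1 < 3*(N+1) := by rw [hN]; omega
      calc (2*N+D₀+1) * m < (3*(N+1)) * m :=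
            mul_lt_mul_of_pos_right this hm1
      _ = 3 * ((N+1) * m) := by ring
    omega
  -- the bilinear map
  set Braw : (↥U × ↥U × ↥U) → (↥U × ↥U × ↥U) → K := fun u v =>
    Δ * (g 0 * ((u.1 : K) * (v.1 : K))) - Δ * (g 1 * ((u.2.1 : K) * (v.2.1 : K)))
      - Δ * (g 2 * ((u.2.2 : K) * (v.2.2 : K))) with hBraw
  have hBmem : ∀ u v, Braw u v ∈ Wm := by
    intro u v
    exact Submodule.sub_mem _ (Submodule.sub_mem _
      (hkey 0 _ u.1.2 _ v.1.2) (hkey 1 _ u.2.1.2 _ v.2.1.2)) (hkey 2 _ u.2.2.2 _ v.2.2.2)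
  set B : (↥U × ↥U × ↥U) →ₗ[ℂ] (↥U × ↥U × ↥U) →ₗ[ℂ] ↥Wm :=
    LinearMap.mk₂ ℂ (fun u v => (⟨Braw u v, hBmem u v⟩ : ↥Wm))
      (fun u u' v => by
        apply Subtype.ext
        simp only [hBraw, Submodule.coe_add, Prod.fst_add, Prod.snd_add]
        push_cast
        ring)
      (fun c u v => by
        apply Subtype.ext
        simp only [hBraw, Submodule.coe_smul, Prod.smul_fst, Prod.smul_snd, SetLike.val_smul,
          Algebra.smul_def]
        ring)
      (fun u v v' => by
        apply Subtype.ext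
        simp only [hBraw, Submodule.coe_add, Prod.fst_add, Prod.snd_add]
        push_cast
        ring)
      (fun c u v => by
        apply Subtype.ext
        simp only [hBraw, Submodule.coe_smul, Prod.smul_fst, Prod.smul_snd, SetLike.val_smul,
          Algebra.smul_def]
        ring)
    with hB
  obtain ⟨v, hv0, hvB⟩ := bilinear_lemma _ _ B hdim
  refine ⟨(v.1 : K), (v.2.1 : K), (v.2.2 : K), ?_, ?_⟩
  · intro ⟨h1, h2, h3⟩
    apply hv0
    have : v = 0 := by
      apply Prod.ext
      · exact Subtype.ext h1
      apply Prod.ext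
      · exact Subtype.ext h2
      · exact Subtype.ext h3
    exact this
  · have hval : Braw v v = 0 := congrArg Subtype.val hvB
    rw [hBraw] at hval
    have hg0 : g 0 = 1 := rfl
    have hg1 : g 1 = a := rfl
    have hg2 : g 2 = b := rfl
    rw [hg0, hg1, hg2] at hval
    have hfactor : Δ * ((v.1:K) ^ 2 - a * (v.2.1:K) ^ 2 - b * (v.2.2:K) ^ 2) = 0 := by
      rw [← hval]; ring
    rcases mul_eq_zero.mp hfactor with h | h
    · exact absurd h hΔ0
    · exact h

end TsenAux

/-- Tsen's theorem for quaternion classes: Let `K` be a field extension of `ℂ`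
that is finitely generated as a field extension and of transcendence degree at most `1`
(no two elements of `K` are algebraically independent over `ℂ`).  Then for all nonzero
`a, b ∈ K` the form `x² − a y² − b z²` has a nontrivial zero and the quaternion algebra
`ℍ[K,a,b]` is not a division ring. -/
theorem tsen_quaternion_splits
    (K : Type*) [Field K] [Algebra ℂ K]
    (hfg : (⊤ : IntermediateField ℂ K).FG)
    (htr : ∀ f : Fin 2 → K, ¬ AlgebraicIndependent ℂ f)
    (a b : K) (ha : a ≠ 0) (hb : b ≠ 0) :
    (∃ x y z : K, ¬ (x = 0 ∧ y = 0 ∧ z = 0) ∧ x ^ 2 - a * y ^ 2 - b * z ^ 2 = 0) ∧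
      ¬ (∀ q : ℍ[K, a, b], q ≠ 0 → IsUnit q) := by
  have hmain : ∃ x y z : K, ¬ (x = 0 ∧ y = 0 ∧ z = 0) ∧ x ^ 2 - a * y ^ 2 - b * z ^ 2 = 0 := by
    by_cases halg : Algebra.IsAlgebraic ℂ K
    · haveI := halg
      obtain ⟨c, hc⟩ := (IsAlgClosed.algebraMap_bijective_of_isIntegral (k := ℂ) (K := K)).2 a
      obtain ⟨s, hs⟩ := IsAlgClosed.exists_pow_nat_eq c (n := 2) (by omega)
      refine ⟨algebraMap ℂ K s, 1, 0, ?_, ?_⟩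
      · intro h; exact one_ne_zero h.2.1
      · have h2 : (algebraMap ℂ K s) ^ 2 = a := by rw [← map_pow, hs, hc]
        rw [h2]; ring
    · have hex : ∃ t : K, Transcendental ℂ t := by
        by_contra hno
        push_neg at hno
        exact halg ⟨fun x => not_not.mp (hno x)⟩
      obtain ⟨t, ht⟩ := hex
      exact TsenAux.conic_zero hfg htr a b ht
  obtain ⟨x, y, z, h1, h2⟩ := hmain
  exact ⟨⟨x, y, z, h1, h2⟩, TsenAux.quat_not_div a b x y z h1 h2⟩
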